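/- For any tripartite density operator ρ_{ABC} on ℂ^d ⊗ ℂ^d ⊗ ℂ^{d₂}, the trace distance between the marginals satisfies D(ρ_{AC}, ρ_{BC}) ≤ 2√(Tr(P_as ρ_{AB}) · Tr(P_s ρ_{AB})). -/

import Mathlib

open scoped Matrix Kronecker ComplexOrder

noncomputable section

namespace QEMD

variable {m n : Type*} [Fintype m] [Fintype n] [DecidableEq m] [DecidableEq n]

/-- Total square root: the PSD square root if `A` is PSD, else `0`. -/
def msqrt (A : Matrix n n ℂ) : Matrix n n ℂ :=
  letI := Classical.dec A.PosSemidef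
  if h : A.PosSemidef then
    (h.1.eigenvectorUnitary : Matrix n n ℂ) * Matrix.diagonal ((↑) ∘ (Real.sqrt ·) ∘ h.1.eigenvalues)
      * (star h.1.eigenvectorUnitary : Matrix n n ℂ) else 0

/-- Trace norm `‖A‖₁ = Tr √(AᴴA)`. -/
def traceNorm (A : Matrix n n ℂ) : ℝ :=
  ((msqrt (Aᴴ * A)).trace).re

/-- Trace distance `D(ρ,σ) = ½‖ρ-σ‖₁`. -/
def traceDist (ρ σ : Matrix n n ℂ) : ℝ := traceNorm (ρ - σ) / 2

/-- Fidelity `F(ρ,σ) = Tr √(√ρ σ √ρ)`. -/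
def fidelity (ρ σ : Matrix n n ℂ) : ℝ :=
  ((msqrt (msqrt ρ * σ * msqrt ρ)).trace).re

/-- Density matrix predicate. -/
def IsDensity (ρ : Matrix n n ℂ) : Prop := ρ.PosSemidef ∧ ρ.trace = 1

/-- Projector `|v⟩⟨v|` onto a vector. -/
def proj (v : n → ℂ) : Matrix n n ℂ := Matrix.of fun i j => v i * star (v j)

/-- Partial trace over the first (left) factor. -/
def traceLeft (ρ : Matrix (m × n) (m × n) ℂ) : Matrix n n ℂ :=
  Matrix.of fun i j => ∑ k, ρ (k, i) (k, j)

/-- Partial trace over the second (right) factor. -/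
def traceRight (ρ : Matrix (m × n) (m × n) ℂ) : Matrix m m ℂ :=
  Matrix.of fun i j => ∑ k, ρ (i, k) (j, k)

/-- The swap operator `S|αβ⟩ = |βα⟩` on `ℂ^d ⊗ ℂ^d`. -/
def swap (d : ℕ) : Matrix (Fin d × Fin d) (Fin d × Fin d) ℂ :=
  Matrix.of fun p q => if p.1 = q.2 ∧ p.2 = q.1 then 1 else 0

/-- Projection onto the symmetric subspace, `P_s = (I + S)/2`. -/
def Psym (d : ℕ) : Matrix (Fin d × Fin d) (Fin d × Fin d) ℂ := (2:ℂ)⁻¹ • (1 + swap d)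

/-- Projection onto the antisymmetric subspace, `P_as = (I - S)/2`. -/
def Pasym (d : ℕ) : Matrix (Fin d × Fin d) (Fin d × Fin d) ℂ := (2:ℂ)⁻¹ • (1 - swap d)

/-- `ρAB` is a quantum coupling of `ρA` and `ρB`. -/
def IsCoupling (ρAB : Matrix (m × n) (m × n) ℂ) (ρA : Matrix m m ℂ)
    (ρB : Matrix n n ℂ) : Prop :=
  IsDensity ρAB ∧ traceRight ρAB = ρA ∧ traceLeft ρAB = ρB

/-- The maximally entangled vector `|Φ⟩ = (1/√d) ∑ᵢ |i⟩|i⟩`. -/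
def maxEnt (d : ℕ) : Fin d × Fin d → ℂ :=
  fun p => if p.1 = p.2 then ((1 / Real.sqrt d : ℝ) : ℂ) else 0

section PSDSqrt
open Matrix
open scoped MatrixOrder
variable {n : Type*} [Fintype n] [DecidableEq n]

def _root_.Matrix.PosSemidef.sqrt {A : Matrix n n ℂ} (h : A.PosSemidef) : Matrix n n ℂ :=
  (h.1.eigenvectorUnitary : Matrix n n ℂ) * Matrix.diagonal ((↑) ∘ (Real.sqrt ·) ∘ h.1.eigenvalues)
    * (star h.1.eigenvectorUnitary : Matrix n n ℂ)

lemma _root_.Matrix.PosSemidef.sqrt_eq_cfc {A : Matrix n n ℂ} (h : A.PosSemidef) :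
    h.sqrt = CFC.sqrt A := by
  rw [CFC.sqrt_eq_real_sqrt A h.nonneg, cfcₙ_eq_cfc (hf0 := Real.sqrt_zero), h.1.cfc_eq]
  rfl

lemma _root_.Matrix.PosSemidef.posSemidef_sqrt {A : Matrix n n ℂ} (h : A.PosSemidef) :
    h.sqrt.PosSemidef := by
  rw [h.sqrt_eq_cfc]; exact nonneg_iff_posSemidef.mp (CFC.sqrt_nonneg A)

lemma _root_.Matrix.PosSemidef.sqrt_mul_self {A : Matrix n n ℂ} (h : A.PosSemidef) :
    h.sqrt * h.sqrt = A := by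
  rw [h.sqrt_eq_cfc]; exact CFC.sqrt_mul_sqrt_self A h.nonneg

lemma _root_.Matrix.PosSemidef.eq_sqrt_of_sq_eq {X A : Matrix n n ℂ} (hX : X.PosSemidef)
    (hA : A.PosSemidef) (hXA : X ^ 2 = A) : X = hA.sqrt := by
  rw [hA.sqrt_eq_cfc]; exact (CFC.sqrt_unique (by rw [← sq]; exact hXA) hX.nonneg).symm

lemma psd_exists_factor {B : Matrix n n ℂ} (h : B.PosSemidef) : ∃ C : Matrix n n ℂ, B = Cᴴ * C :=
  ⟨h.sqrt, by rw [h.posSemidef_sqrt.1.eq, h.sqrt_mul_self]⟩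

end PSDSqrt

-- ============ auxiliary machinery ============
section Aux
open Matrix
variable {n : Type*} [Fintype n] [DecidableEq n]

lemma psd_diag_nonneg {A : Matrix n n ℂ} (hA : A.PosSemidef) (i : n) :
    0 ≤ A i i := by
  exact hA.diag_nonneg

lemma psd_trace_re_nonneg {A : Matrix n n ℂ} (hA : A.PosSemidef) :
    0 ≤ A.trace.re := by
  rw [Matrix.trace]
  simp only [Complex.re_sum]
  exact Finset.sum_nonneg fun i _ => (Complex.le_def.mp (psd_diag_nonneg hA i)).1

lemma trace_mul_psd_nonneg {A B : Matrix n n ℂ} (hA : A.PosSemidef) (hB : B.PosSemidef) :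
    0 ≤ ((A * B).trace).re := by
  obtain ⟨C, rfl⟩ := psd_exists_factor hB
  rw [← Matrix.mul_assoc, Matrix.trace_mul_cycle]
  exact psd_trace_re_nonneg (hA.mul_mul_conjTranspose_same C)

noncomputable def fh {A : Matrix n n ℂ} (hA : A.IsHermitian) (f : ℝ → ℝ) : Matrix n n ℂ :=
  (hA.eigenvectorUnitary : Matrix n n ℂ) * diagonal (Complex.ofReal ∘ f ∘ hA.eigenvalues) *
    (star (hA.eigenvectorUnitary : Matrix n n ℂ))

variable {A : Matrix n n ℂ} (hA : A.IsHermitian)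

lemma fh_id : fh hA id = A := (hA.spectral_theorem).symm

lemma star_mul_self_eigen : star (hA.eigenvectorUnitary : Matrix n n ℂ) *
    (hA.eigenvectorUnitary : Matrix n n ℂ) = 1 :=
  Matrix.UnitaryGroup.star_mul_self _

lemma mul_star_self_eigen : (hA.eigenvectorUnitary : Matrix n n ℂ) *
    star (hA.eigenvectorUnitary : Matrix n n ℂ) = 1 :=
  hA.eigenvectorUnitary.2.2

lemma star_mul_self_cancel (X : Matrix n n ℂ) :
    star (hA.eigenvectorUnitary : Matrix n n ℂ) * ((hA.eigenvectorUnitary : Matrix n n ℂ) * X)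
      = X := by
  rw [← Matrix.mul_assoc, star_mul_self_eigen, Matrix.one_mul]

lemma fh_mul (f g : ℝ → ℝ) : fh hA f * fh hA g = fh hA (fun x => f x * g x) := by
  unfold fh
  simp only [Matrix.mul_assoc]
  rw [star_mul_self_cancel]
  rw [← Matrix.mul_assoc (diagonal _), Matrix.diagonal_mul_diagonal]
  have h : (fun i => (Complex.ofReal ∘ f ∘ hA.eigenvalues) i * (Complex.ofReal ∘ g ∘ hA.eigenvalues) i)
      = Complex.ofReal ∘ (fun x => f x * g x) ∘ hA.eigenvalues := by
    funext i; simp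
  rw [h]

lemma fh_congr {f g : ℝ → ℝ} (h : ∀ x, f x = g x) : fh hA f = fh hA g := by
  unfold fh
  have : Complex.ofReal ∘ f ∘ hA.eigenvalues = Complex.ofReal ∘ g ∘ hA.eigenvalues := by
    funext i; simp [h _]
  rw [this]

lemma fh_sub (f g : ℝ → ℝ) : fh hA f - fh hA g = fh hA (fun x => f x - g x) := by
  unfold fh
  rw [← Matrix.sub_mul, ← Matrix.mul_sub, Matrix.diagonal_sub]
  have h : (fun i => (Complex.ofReal ∘ f ∘ hA.eigenvalues) i - (Complex.ofReal ∘ g ∘ hA.eigenvalues) i)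
      = Complex.ofReal ∘ (fun x => f x - g x) ∘ hA.eigenvalues := by
    funext i; simp
  rw [h]

lemma fh_add (f g : ℝ → ℝ) : fh hA f + fh hA g = fh hA (fun x => f x + g x) := by
  unfold fh
  rw [← Matrix.add_mul, ← Matrix.mul_add, Matrix.diagonal_add]
  have h : (fun i => (Complex.ofReal ∘ f ∘ hA.eigenvalues) i + (Complex.ofReal ∘ g ∘ hA.eigenvalues) i)
      = Complex.ofReal ∘ (fun x => f x + g x) ∘ hA.eigenvalues := by
    funext i; simp
  rw [h]

lemma fh_one : fh hA (fun _ => 1) = 1 := by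
  unfold fh
  have : diagonal (Complex.ofReal ∘ (fun _ : ℝ => (1:ℝ)) ∘ hA.eigenvalues) = (1 : Matrix n n ℂ) := by
    have h : Complex.ofReal ∘ (fun _ : ℝ => (1:ℝ)) ∘ hA.eigenvalues = fun _ => 1 := by
      funext i; simp
    rw [h, Matrix.diagonal_one]
  rw [this, Matrix.mul_one, mul_star_self_eigen]

lemma fh_herm (f : ℝ → ℝ) : (fh hA f).IsHermitian := by
  have hD : (diagonal (Complex.ofReal ∘ f ∘ hA.eigenvalues))ᴴ
      = diagonal (Complex.ofReal ∘ f ∘ hA.eigenvalues) := by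
    have h : star (Complex.ofReal ∘ f ∘ hA.eigenvalues)
        = Complex.ofReal ∘ f ∘ hA.eigenvalues := by
      funext i; simp [Pi.star_apply, Function.comp, Complex.conj_ofReal]
    rw [Matrix.diagonal_conjTranspose, h]
  unfold fh
  rw [Matrix.IsHermitian, Matrix.star_eq_conjTranspose, Matrix.conjTranspose_mul,
    Matrix.conjTranspose_mul, hD, ← Matrix.star_eq_conjTranspose, ← Matrix.star_eq_conjTranspose,
    star_star, Matrix.mul_assoc]

lemma fh_posSemidef {f : ℝ → ℝ} (hf : ∀ x, 0 ≤ f x) : (fh hA f).PosSemidef := by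
  have hd : (diagonal (Complex.ofReal ∘ f ∘ hA.eigenvalues)).PosSemidef :=
    posSemidef_diagonal_iff.mpr fun i => by
      simpa using Complex.zero_le_real.mpr (hf _)
  simpa [fh, Matrix.star_eq_conjTranspose, Matrix.mul_assoc] using
    hd.mul_mul_conjTranspose_same (hA.eigenvectorUnitary : Matrix n n ℂ)

lemma fh_trace (f : ℝ → ℝ) : (fh hA f).trace = ∑ i, (f (hA.eigenvalues i) : ℂ) := by
  unfold fh
  rw [Matrix.trace_mul_cycle, star_mul_self_eigen, Matrix.one_mul, Matrix.trace_diagonal]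
  simp

lemma msqrt_of_psd {B : Matrix n n ℂ} (h : B.PosSemidef) : msqrt B = h.sqrt := by
  unfold msqrt
  exact dif_pos h

lemma traceNorm_herm : traceNorm A = ∑ i, |hA.eigenvalues i| := by
  have hPSD : (Aᴴ * A).PosSemidef := Matrix.posSemidef_conjTranspose_mul_self A
  have habs : (fh hA (fun x => |x|)).PosSemidef := fh_posSemidef hA (fun x => abs_nonneg x)
  have hsq : (fh hA (fun x => |x|)) ^ 2 = Aᴴ * A := by
    rw [pow_two, fh_mul, hA.eq]
    conv_rhs => rw [← fh_id hA, fh_mul hA id id]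
    exact fh_congr hA fun x => (abs_mul_abs_self x).trans rfl
  have hmsq : msqrt (Aᴴ * A) = fh hA (fun x => |x|) := by
    rw [msqrt_of_psd hPSD]
    exact (habs.eq_sqrt_of_sq_eq hPSD hsq).symm
  rw [traceNorm, hmsq, fh_trace]
  rw [← Complex.ofReal_sum]
  simp

include hA in
lemma exists_dual : ∃ W : Matrix n n ℂ, W.IsHermitian ∧ (1 - W).PosSemidef ∧
    (1 + W).PosSemidef ∧ (1 - W * W).PosSemidef ∧ ((W * A).trace).re = traceNorm A := by
  set s : ℝ → ℝ := fun x => if x < 0 then -1 else if 0 < x then 1 else 0 with hs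
  refine ⟨fh hA s, fh_herm hA s, ?_, ?_, ?_, ?_⟩
  · rw [← fh_one hA, fh_sub]
    exact fh_posSemidef hA fun x => by simp only [hs]; split_ifs <;> norm_num
  · rw [← fh_one hA, fh_add]
    exact fh_posSemidef hA fun x => by simp only [hs]; split_ifs <;> norm_num
  · rw [fh_mul, ← fh_one hA, fh_sub]
    exact fh_posSemidef hA fun x => by simp only [hs]; split_ifs <;> norm_num
  · have hmul : fh hA s * A = fh hA (fun x => s x * x) := by
      have h := fh_mul hA s id
      rw [fh_id] at h
      exact h
    have habs : fh hA (fun x => s x * x) = fh hA (fun x => |x|) := by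
      refine fh_congr hA fun x => ?_
      simp only [hs]
      rcases lt_trichotomy x 0 with h | h | h
      · rw [if_pos h, abs_of_neg h]; ring
      · subst h; simp
      · rw [if_neg (not_lt.mpr h.le), if_pos h, abs_of_pos h]; ring
    rw [hmul, habs, fh_trace, traceNorm_herm hA, ← Complex.ofReal_sum]
    simp

include hA in
lemma dual_bound {C : Matrix n n ℂ} (h1 : (1 - C).PosSemidef) (h2 : (1 + C).PosSemidef) :
    ((C * A).trace).re ≤ traceNorm A := by
  set P := fh hA (fun x => max x 0) with hPdef
  set N := fh hA (fun x => max (-x) 0) with hNdef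
  have hP : P.PosSemidef := fh_posSemidef hA fun x => le_max_right _ _
  have hN : N.PosSemidef := fh_posSemidef hA fun x => le_max_right _ _
  have hPN : A = P - N := by
    rw [hPdef, hNdef, fh_sub]
    conv_lhs => rw [← fh_id hA]
    refine fh_congr hA fun x => ?_
    rcases le_total x 0 with h | h
    · rw [max_eq_right h, max_eq_left (neg_nonneg.mpr h)]
      show x = 0 - -x
      ring
    · rw [max_eq_left h, max_eq_right (neg_nonpos.mpr h)]
      show x = x - 0
      ring
  have hTN : traceNorm A = (P.trace).re + (N.trace).re := by
    rw [traceNorm_herm hA, hPdef, hNdef, fh_trace, fh_trace, ← Complex.ofReal_sum,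
      ← Complex.ofReal_sum, Complex.ofReal_re, Complex.ofReal_re, ← Finset.sum_add_distrib]
    refine Finset.sum_congr rfl fun i _ => ?_
    rcases le_total (hA.eigenvalues i) 0 with h | h
    · rw [abs_of_nonpos h, max_eq_right h, max_eq_left (neg_nonneg.mpr h)]; ring
    · rw [abs_of_nonneg h, max_eq_left h, max_eq_right (neg_nonpos.mpr h)]; ring
  have b1 : ((C * P).trace).re ≤ (P.trace).re := by
    have := trace_mul_psd_nonneg h1 hP
    rw [Matrix.sub_mul, Matrix.one_mul, Matrix.trace_sub, Complex.sub_re] at this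
    linarith
  have b2 : -((C * N).trace).re ≤ (N.trace).re := by
    have := trace_mul_psd_nonneg h2 hN
    rw [Matrix.add_mul, Matrix.one_mul, Matrix.trace_add, Complex.add_re] at this
    linarith
  have hsplit : ((C * A).trace).re = ((C * P).trace).re - ((C * N).trace).re := by
    rw [hPN, Matrix.mul_sub, Matrix.trace_sub, Complex.sub_re]
  rw [hsplit, hTN]
  linarith

end Aux

set_option linter.unusedSectionVars false
section CS
open Matrix
variable {n : Type*} [Fintype n] [DecidableEq n]

lemma trace_conj_pair (Z W : Matrix n n ℂ) :
    (Zᴴ * W).trace = ∑ p : n × n, (starRingEnd ℂ) (Z p.2 p.1) * W p.2 p.1 := by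
  rw [Matrix.trace, Fintype.sum_prod_type]
  simp only [Matrix.diag, Matrix.mul_apply, Matrix.conjTranspose_apply]
  rfl

lemma trace_self_pair (Z : Matrix n n ℂ) :
    ((Zᴴ * Z).trace).re = ∑ p : n × n, ‖Z p.2 p.1‖ ^ 2 := by
  rw [trace_conj_pair, Complex.re_sum]
  refine Finset.sum_congr rfl fun p _ => ?_
  rw [mul_comm, Complex.mul_conj, ← Complex.normSq_eq_norm_sq]
  simp

lemma cs_trace (X Y : Matrix n n ℂ) :
    ((Xᴴ * Y).trace).re ≤ Real.sqrt ((Xᴴ * X).trace).re * Real.sqrt ((Yᴴ * Y).trace).re := by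
  have habs : ((Xᴴ * Y).trace).re
      ≤ ∑ p : n × n, ‖X p.2 p.1‖ * ‖Y p.2 p.1‖ := by
    rw [trace_conj_pair, Complex.re_sum]
    refine Finset.sum_le_sum fun p _ => ?_
    calc ((starRingEnd ℂ) (X p.2 p.1) * Y p.2 p.1).re
        ≤ ‖(starRingEnd ℂ) (X p.2 p.1) * Y p.2 p.1‖ := Complex.re_le_norm _
      _ = ‖X p.2 p.1‖ * ‖Y p.2 p.1‖ := by
          rw [norm_mul, Complex.norm_conj]
  rw [trace_self_pair X, trace_self_pair Y]
  refine habs.trans ?_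
  have hcs := Finset.sum_mul_sq_le_sq_mul_sq Finset.univ
    (fun p : n × n => ‖X p.2 p.1‖) (fun p => ‖Y p.2 p.1‖)
  have h0 : 0 ≤ ∑ p : n × n, ‖X p.2 p.1‖ * ‖Y p.2 p.1‖ :=
    Finset.sum_nonneg fun p _ => mul_nonneg (norm_nonneg _) (norm_nonneg _)
  calc ∑ p : n × n, ‖X p.2 p.1‖ * ‖Y p.2 p.1‖
      = Real.sqrt ((∑ p : n × n, ‖X p.2 p.1‖ * ‖Y p.2 p.1‖) ^ 2) :=
        (Real.sqrt_sq h0).symm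
    _ ≤ Real.sqrt ((∑ p : n × n, ‖X p.2 p.1‖ ^ 2)
          * ∑ p : n × n, ‖Y p.2 p.1‖ ^ 2) := Real.sqrt_le_sqrt hcs
    _ = Real.sqrt (∑ p : n × n, ‖X p.2 p.1‖ ^ 2)
          * Real.sqrt (∑ p : n × n, ‖Y p.2 p.1‖ ^ 2) :=
        Real.sqrt_mul (Finset.sum_nonneg fun p _ => sq_nonneg _) _

end CS

section Emb
open Matrix
variable {α β γ : Type*} [Fintype α] [Fintype β] [Fintype γ]
  [DecidableEq α] [DecidableEq β] [DecidableEq γ]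

/-- Embed an operator on `A ⊗ C` as one on `(A ⊗ B) ⊗ C` (identity on `B`). -/
def embE (C : Matrix (α × γ) (α × γ) ℂ) : Matrix ((α × β) × γ) ((α × β) × γ) ℂ :=
  Matrix.of fun p q => (if p.1.2 = q.1.2 then 1 else 0) * C (p.1.1, p.2) (q.1.1, q.2)

/-- Embed an operator on `A ⊗ B` as one on `(A ⊗ B) ⊗ C` (identity on `C`). -/
def embF (X : Matrix (α × β) (α × β) ℂ) : Matrix ((α × β) × γ) ((α × β) × γ) ℂ :=
  Matrix.of fun p q => (if p.2 = q.2 then 1 else 0) * X p.1 q.1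

/-- Partial trace over the `B` factor of `(A ⊗ B) ⊗ C`. -/
def ptB (M : Matrix ((α × β) × γ) ((α × β) × γ) ℂ) : Matrix (α × γ) (α × γ) ℂ :=
  Matrix.of fun p q => ∑ b, M ((p.1, b), p.2) ((q.1, b), q.2)

lemma embE_mul (C D : Matrix (α × γ) (α × γ) ℂ) :
    (embE C : Matrix ((α × β) × γ) _ ℂ) * embE D = embE (C * D) := by
  ext ⟨⟨a, b⟩, c⟩ ⟨⟨a', b'⟩, c'⟩
  simp only [embE, Matrix.mul_apply, Matrix.of_apply, Fintype.sum_prod_type]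
  simp [Finset.mul_sum, Finset.sum_ite_eq', Finset.sum_ite_eq, mul_comm, mul_assoc, mul_left_comm]

lemma embF_mul (X Y : Matrix (α × β) (α × β) ℂ) :
    (embF X : Matrix ((α × β) × γ) _ ℂ) * embF Y = embF (X * Y) := by
  ext ⟨p, c⟩ ⟨q, c'⟩
  simp only [embF, Matrix.mul_apply, Matrix.of_apply, Fintype.sum_prod_type]
  simp [Finset.mul_sum, Finset.sum_ite_eq', Finset.sum_ite_eq, mul_comm, mul_assoc, mul_left_comm]

lemma embE_one : (embE 1 : Matrix ((α × β) × γ) _ ℂ) = 1 := by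
  ext ⟨⟨a, b⟩, c⟩ ⟨⟨a', b'⟩, c'⟩
  simp only [embE, Matrix.of_apply, Matrix.one_apply, Prod.mk.injEq, Prod.ext_iff]
  by_cases h1 : a = a' <;> by_cases h2 : b = b' <;> by_cases h3 : c = c' <;>
    simp [h1, h2, h3, Prod.ext_iff]

lemma embF_one : (embF 1 : Matrix ((α × β) × γ) _ ℂ) = 1 := by
  ext ⟨p, c⟩ ⟨q, c'⟩
  simp only [embF, Matrix.of_apply, Matrix.one_apply, Prod.ext_iff]
  by_cases h1 : p = q <;> by_cases h3 : c = c' <;> simp [h1, h3, Prod.ext_iff]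

lemma embE_add (C D : Matrix (α × γ) (α × γ) ℂ) :
    (embE (C + D) : Matrix ((α × β) × γ) _ ℂ) = embE C + embE D := by
  ext p q
  simp [embE, mul_add]

lemma embE_sub (C D : Matrix (α × γ) (α × γ) ℂ) :
    (embE (C - D) : Matrix ((α × β) × γ) _ ℂ) = embE C - embE D := by
  ext p q
  simp [embE, mul_sub]

lemma embF_sub (X Y : Matrix (α × β) (α × β) ℂ) :
    (embF (X - Y) : Matrix ((α × β) × γ) _ ℂ) = embF X - embF Y := by
  ext p q
  simp [embF, mul_sub]

lemma embE_conjTranspose (C : Matrix (α × γ) (α × γ) ℂ) :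
    (embE C : Matrix ((α × β) × γ) _ ℂ)ᴴ = embE Cᴴ := by
  ext ⟨⟨a, b⟩, c⟩ ⟨⟨a', b'⟩, c'⟩
  simp [embE, Matrix.conjTranspose_apply, eq_comm, apply_ite (starRingEnd ℂ)]

lemma embF_conjTranspose (X : Matrix (α × β) (α × β) ℂ) :
    (embF X : Matrix ((α × β) × γ) _ ℂ)ᴴ = embF Xᴴ := by
  ext ⟨p, c⟩ ⟨q, c'⟩
  simp [embF, Matrix.conjTranspose_apply, eq_comm, apply_ite (starRingEnd ℂ)]

lemma embE_posSemidef {C : Matrix (α × γ) (α × γ) ℂ} (hC : C.PosSemidef) :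
    (embE C : Matrix ((α × β) × γ) _ ℂ).PosSemidef := by
  obtain ⟨B, rfl⟩ := psd_exists_factor hC
  rw [← embE_mul, ← embE_conjTranspose]
  exact Matrix.posSemidef_conjTranspose_mul_self _

lemma embF_posSemidef {X : Matrix (α × β) (α × β) ℂ} (hX : X.PosSemidef) :
    (embF X : Matrix ((α × β) × γ) _ ℂ).PosSemidef := by
  obtain ⟨B, rfl⟩ := psd_exists_factor hX
  rw [← embF_mul, ← embF_conjTranspose]
  exact Matrix.posSemidef_conjTranspose_mul_self _

lemma trace_embE_mul (C : Matrix (α × γ) (α × γ) ℂ)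
    (M : Matrix ((α × β) × γ) ((α × β) × γ) ℂ) :
    ((embE C * M).trace) = ((C * ptB M).trace) := by
  simp only [Matrix.trace, Matrix.diag, Matrix.mul_apply, embE, ptB, Matrix.of_apply,
    Fintype.sum_prod_type, Finset.mul_sum, Finset.sum_ite_eq', Finset.mem_univ, if_true,
    ite_mul, zero_mul, one_mul, Finset.sum_ite_irrel, Finset.sum_const_zero, Finset.sum_ite_eq]
  refine Finset.sum_congr rfl fun a _ => ?_
  rw [Finset.sum_comm]
  refine Finset.sum_congr rfl fun c _ => ?_
  rw [Finset.sum_comm]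
  refine Finset.sum_congr rfl fun a2 _ => ?_
  rw [Finset.sum_comm]

lemma trace_embF_mul (X : Matrix (α × β) (α × β) ℂ)
    (M : Matrix ((α × β) × γ) ((α × β) × γ) ℂ) :
    ((embF X * M).trace) = ((X * traceRight M).trace) := by
  simp only [Matrix.trace, Matrix.diag, Matrix.mul_apply, embF, traceRight, Matrix.of_apply,
    Fintype.sum_prod_type, Finset.mul_sum, Finset.sum_ite_eq', Finset.mem_univ, if_true,
    ite_mul, zero_mul, one_mul, Finset.sum_ite_irrel, Finset.sum_const_zero, Finset.sum_ite_eq]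
  refine Finset.sum_congr rfl fun a _ => ?_
  refine Finset.sum_congr rfl fun b _ => ?_
  rw [Finset.sum_comm]
  refine Finset.sum_congr rfl fun a2 _ => ?_
  rw [Finset.sum_comm]

lemma ptB_sub (M N : Matrix ((α × β) × γ) ((α × β) × γ) ℂ) :
    ptB (M - N) = ptB M - ptB N := by
  ext p q
  simp [ptB, Finset.sum_sub_distrib]

lemma ptB_herm {M : Matrix ((α × β) × γ) ((α × β) × γ) ℂ} (hM : M.IsHermitian) :
    (ptB M).IsHermitian := by
  ext p q
  rw [Matrix.conjTranspose_apply]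
  simp only [ptB, Matrix.of_apply, star_sum]
  refine Finset.sum_congr rfl fun b _ => ?_
  rw [← Matrix.conjTranspose_apply, hM.eq]

end Emb

section SwapAlg
open Matrix

set_option linter.unusedSectionVars false

lemma swap_conjTranspose (d : ℕ) : (swap d)ᴴ = swap d := by
  ext p q
  rw [Matrix.conjTranspose_apply]
  have h : (q.1 = p.2 ∧ q.2 = p.1) ↔ (p.1 = q.2 ∧ p.2 = q.1) := by
    constructor <;> rintro ⟨h1, h2⟩ <;> exact ⟨h2.symm, h1.symm⟩
  simp [swap, h, apply_ite (star : ℂ → ℂ)]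

lemma swap_mul_swap (d : ℕ) : swap d * swap d = 1 := by
  ext ⟨a, b⟩ ⟨c, e⟩
  simp only [swap, Matrix.mul_apply, Matrix.of_apply, Fintype.sum_prod_type, ite_and,
    Finset.sum_ite_irrel, Finset.sum_const_zero, Finset.sum_ite_eq, Finset.sum_ite_eq',
    Finset.mem_univ, if_true, Matrix.one_apply, Prod.mk.injEq]
  by_cases h1 : a = c <;> by_cases h2 : b = e <;> simp [h1, h2, eq_comm, ite_and]

lemma Psym_add_Pasym (d : ℕ) : Psym d + Pasym d = 1 := by
  unfold Psym Pasym
  module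

lemma Psym_sub_Pasym (d : ℕ) : Psym d - Pasym d = swap d := by
  unfold Psym Pasym
  module

lemma sq_one_add (d : ℕ) : (1 + swap d) * (1 + swap d) = (2:ℂ) • (1 + swap d) := by
  rw [mul_add, mul_one, add_mul, one_mul, swap_mul_swap d]
  module

lemma sq_one_sub (d : ℕ) : (1 - swap d) * (1 - swap d) = (2:ℂ) • (1 - swap d) := by
  rw [mul_sub, mul_one, sub_mul, one_mul, swap_mul_swap d]
  module

lemma Psym_mul_Psym (d : ℕ) : Psym d * Psym d = Psym d := by
  unfold Psym
  rw [Matrix.smul_mul, Matrix.mul_smul, smul_smul, sq_one_add]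
  module

lemma Pasym_mul_Pasym (d : ℕ) : Pasym d * Pasym d = Pasym d := by
  unfold Pasym
  rw [Matrix.smul_mul, Matrix.mul_smul, smul_smul, sq_one_sub]
  module

lemma Psym_conjTranspose (d : ℕ) : (Psym d)ᴴ = Psym d := by
  unfold Psym
  rw [Matrix.conjTranspose_smul, Matrix.conjTranspose_add, Matrix.conjTranspose_one,
    swap_conjTranspose]
  norm_num

lemma Pasym_conjTranspose (d : ℕ) : (Pasym d)ᴴ = Pasym d := by
  unfold Pasym
  rw [Matrix.conjTranspose_smul, Matrix.conjTranspose_sub, Matrix.conjTranspose_one,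
    swap_conjTranspose]
  norm_num

lemma psd_of_herm_idem {n : Type*} [Fintype n] [DecidableEq n] {M : Matrix n n ℂ}
    (hH : Mᴴ = M) (hI : M * M = M) : M.PosSemidef := by
  have h : M = Mᴴ * M := by rw [hH, hI]
  rw [h]
  exact Matrix.posSemidef_conjTranspose_mul_self M

lemma Psym_posSemidef (d : ℕ) : (Psym d).PosSemidef :=
  psd_of_herm_idem (Psym_conjTranspose d) (Psym_mul_Psym d)

lemma Pasym_posSemidef (d : ℕ) : (Pasym d).PosSemidef :=
  psd_of_herm_idem (Pasym_conjTranspose d) (Pasym_mul_Pasym d)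

end SwapAlg

section Contr
open Matrix
variable {α β γ : Type*} [Fintype α] [Fintype β] [Fintype γ]
  [DecidableEq α] [DecidableEq β] [DecidableEq γ]

lemma embF_add (X Y : Matrix (α × β) (α × β) ℂ) :
    (embF (X + Y) : Matrix ((α × β) × γ) _ ℂ) = embF X + embF Y := by
  ext p q
  simp [embF, mul_add]

lemma traceNorm_ptB_le {M : Matrix ((α × β) × γ) ((α × β) × γ) ℂ} (hM : M.IsHermitian) :
    traceNorm (ptB M) ≤ traceNorm M := by
  obtain ⟨W, hW, h1, h2, h3, hTr⟩ := exists_dual (ptB_herm hM)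
  rw [← hTr, ← trace_embE_mul]
  refine dual_bound hM ?_ ?_
  · rw [← embE_one (β := β), ← embE_sub]
    exact embE_posSemidef h1
  · rw [← embE_one (β := β), ← embE_add]
    exact embE_posSemidef h2

end Contr

section Cross
open Matrix
variable {n : Type*} [Fintype n] [DecidableEq n]

lemma cross_bound {ρ P Q W : Matrix n n ℂ}
    (hρ : ρ.PosSemidef) (hPH : Pᴴ = P) (hQH : Qᴴ = Q) (hP2 : P * P = P) (hQ2 : Q * Q = Q)
    (hWH : Wᴴ = W) (hW2 : (1 - W * W).PosSemidef) :
    ((W * (P * ρ * Q)).trace).re ≤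
      Real.sqrt (((Q * ρ).trace).re) * Real.sqrt (((P * ρ).trace).re) := by
  set R := hρ.sqrt with hRdef
  have hRH : Rᴴ = R := hρ.posSemidef_sqrt.1
  have hRR : R * R = ρ := hρ.sqrt_mul_self
  set X := W * Q * R with hX
  set Y := P * R with hY
  have hXc : Xᴴ = R * Q * W := by
    rw [hX, Matrix.conjTranspose_mul, Matrix.conjTranspose_mul, hRH, hQH, hWH, Matrix.mul_assoc]
  have e1 : (W * (P * ρ * Q)).trace = (Xᴴ * Y).trace := by
    rw [hXc, hY, ← hRR, Matrix.trace_mul_comm]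
    simp only [Matrix.mul_assoc]
    conv_lhs => rw [Matrix.trace_mul_comm]
    simp only [Matrix.mul_assoc]
    conv_lhs => rw [Matrix.trace_mul_comm]
    simp only [Matrix.mul_assoc]
  have e2 : ((Yᴴ * Y).trace) = ((P * ρ).trace) := by
    rw [hY, Matrix.conjTranspose_mul, hRH, hPH]
    simp only [Matrix.mul_assoc]
    rw [← Matrix.mul_assoc P P, hP2]
    conv_lhs => rw [Matrix.trace_mul_comm]
    simp only [Matrix.mul_assoc]
    rw [hRR]
  have e3 : ((Xᴴ * X).trace).re ≤ ((Q * ρ).trace).re := by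
    have hQρQ : (Q * ρ * Q).PosSemidef := by
      have := hρ.mul_mul_conjTranspose_same Q
      rwa [hQH] at this
    have hnn := trace_mul_psd_nonneg hW2 hQρQ
    rw [Matrix.sub_mul, Matrix.one_mul, Matrix.trace_sub, Complex.sub_re] at hnn
    have eX : ((Xᴴ * X).trace) = ((W * W * (Q * ρ * Q)).trace) := by
      rw [hXc, hX, ← hRR]
      simp only [Matrix.mul_assoc]
      conv_lhs => rw [Matrix.trace_mul_comm]
      simp only [Matrix.mul_assoc]
      conv_lhs => rw [Matrix.trace_mul_comm]
      simp only [Matrix.mul_assoc]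
    have eQ : ((Q * (ρ * Q)).trace) = ((Q * ρ).trace) := by
      conv_lhs => rw [Matrix.trace_mul_comm]
      rw [Matrix.mul_assoc, hQ2, Matrix.trace_mul_comm]
    rw [eX]
    calc ((W * W * (Q * ρ * Q)).trace).re ≤ ((Q * ρ * Q).trace).re := by linarith
      _ = ((Q * ρ).trace).re := by
          rw [Matrix.mul_assoc, eQ]
  calc ((W * (P * ρ * Q)).trace).re = ((Xᴴ * Y).trace).re := by rw [e1]
    _ ≤ Real.sqrt ((Xᴴ * X).trace).re * Real.sqrt ((Yᴴ * Y).trace).re := cs_trace X Y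
    _ ≤ Real.sqrt (((Q * ρ).trace).re) * Real.sqrt (((P * ρ).trace).re) := by
        rw [e2]
        exact mul_le_mul_of_nonneg_right (Real.sqrt_le_sqrt e3) (Real.sqrt_nonneg _)

end Cross


theorem stmt18 (d d2 : ℕ)
    (ρ : Matrix ((Fin d × Fin d) × Fin d2) ((Fin d × Fin d) × Fin d2) ℂ)
    (hρ : IsDensity ρ)
    (ρAB : Matrix (Fin d × Fin d) (Fin d × Fin d) ℂ) (hAB : ρAB = traceRight ρ)
    (ρAC ρBC : Matrix (Fin d × Fin d2) (Fin d × Fin d2) ℂ)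
    (hAC : ρAC = Matrix.of fun p q => ∑ b, ρ ((p.1, b), p.2) ((q.1, b), q.2))
    (hBC : ρBC = Matrix.of fun p q => ∑ a, ρ ((a, p.1), p.2) ((a, q.1), q.2)) :
    traceDist ρAC ρBC
      ≤ 2 * Real.sqrt (((Pasym d * ρAB).trace).re * ((Psym d * ρAB).trace).re) := by
  have hρpsd := hρ.1
  have hH : ρ.IsHermitian := hρpsd.1
  set Sb : Matrix ((Fin d × Fin d) × Fin d2) ((Fin d × Fin d) × Fin d2) ℂ :=
    embF (swap d) with hSb
  set Ps : Matrix ((Fin d × Fin d) × Fin d2) ((Fin d × Fin d) × Fin d2) ℂ :=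
    embF (Psym d) with hPs
  set Pa : Matrix ((Fin d × Fin d) × Fin d2) ((Fin d × Fin d) × Fin d2) ℂ :=
    embF (Pasym d) with hPa
  have hSbH : Sbᴴ = Sb := by rw [hSb, embF_conjTranspose, swap_conjTranspose]
  have hPsH : Psᴴ = Ps := by rw [hPs, embF_conjTranspose, Psym_conjTranspose]
  have hPaH : Paᴴ = Pa := by rw [hPa, embF_conjTranspose, Pasym_conjTranspose]
  have hPsPa1 : Ps + Pa = 1 := by rw [hPs, hPa, ← embF_add, Psym_add_Pasym, embF_one]
  have hSbPsPa : Sb = Ps - Pa := by rw [hPs, hPa, ← embF_sub, Psym_sub_Pasym, hSb]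
  have hPs2 : Ps * Ps = Ps := by rw [hPs, embF_mul, Psym_mul_Psym]
  have hPa2 : Pa * Pa = Pa := by rw [hPa, embF_mul, Pasym_mul_Pasym]
  have hPsPSD : Ps.PosSemidef := hPs ▸ embF_posSemidef (Psym_posSemidef d)
  have hPaPSD : Pa.PosSemidef := hPa ▸ embF_posSemidef (Pasym_posSemidef d)
  set σ := Sb * ρ * Sb with hσdef
  have hσH : σ.IsHermitian := by
    show σᴴ = σ
    rw [hσdef, Matrix.conjTranspose_mul, Matrix.conjTranspose_mul, hSbH, hH.eq,
      ← Matrix.mul_assoc]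
  have hAC' : ρAC = ptB ρ := by rw [hAC]; rfl
  have hBC' : ρBC = ptB σ := by
    rw [hBC, hσdef, hSb]
    ext ⟨x, c⟩ ⟨y, c'⟩
    simp only [ptB, embF, swap, Matrix.of_apply, Matrix.mul_apply,
      Fintype.sum_prod_type, ite_and, ite_mul, mul_ite, zero_mul, mul_zero, one_mul, mul_one,
      Finset.sum_ite_irrel, Finset.sum_const_zero, Finset.sum_ite_eq, Finset.sum_ite_eq',
      Finset.mem_univ, if_true]
  have hdiffH : (ρ - σ).IsHermitian := hH.sub hσH
  have hq : Pa = 1 - Ps := eq_sub_of_add_eq' hPsPa1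
  have hdecomp : ρ - σ = Ps * ρ * Pa + Pa * ρ * Ps + (Ps * ρ * Pa + Pa * ρ * Ps) := by
    rw [hσdef, hSbPsPa, hq]
    noncomm_ring
  obtain ⟨W, hWH, _, _, h3W, hTrW⟩ := exists_dual hdiffH
  have ha0 : 0 ≤ ((Pa * ρ).trace).re := trace_mul_psd_nonneg hPaPSD hρpsd
  have hs0 : 0 ≤ ((Ps * ρ).trace).re := trace_mul_psd_nonneg hPsPSD hρpsd
  have t1 : ((W * (Ps * ρ * Pa)).trace).re
      ≤ Real.sqrt (((Pa * ρ).trace).re) * Real.sqrt (((Ps * ρ).trace).re) :=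
    cross_bound hρpsd hPsH hPaH hPs2 hPa2 hWH h3W
  have t2 : ((W * (Pa * ρ * Ps)).trace).re
      ≤ Real.sqrt (((Ps * ρ).trace).re) * Real.sqrt (((Pa * ρ).trace).re) :=
    cross_bound hρpsd hPaH hPsH hPa2 hPs2 hWH h3W
  have hTr2 : ((W * (ρ - σ)).trace).re
      = ((W * (Ps * ρ * Pa)).trace).re + ((W * (Pa * ρ * Ps)).trace).re
        + (((W * (Ps * ρ * Pa)).trace).re + ((W * (Pa * ρ * Ps)).trace).re) := by
    rw [hdecomp, Matrix.mul_add, Matrix.mul_add, Matrix.trace_add, Matrix.trace_add,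
      Complex.add_re, Complex.add_re]
  have hsum : traceNorm (ρ - σ)
      ≤ 4 * (Real.sqrt (((Pa * ρ).trace).re) * Real.sqrt (((Ps * ρ).trace).re)) := by
    rw [← hTrW, hTr2]
    have hmc : Real.sqrt (((Ps * ρ).trace).re) * Real.sqrt (((Pa * ρ).trace).re)
        = Real.sqrt (((Pa * ρ).trace).re) * Real.sqrt (((Ps * ρ).trace).re) := mul_comm _ _
    linarith
  have hcontr : traceNorm (ptB (ρ - σ)) ≤ traceNorm (ρ - σ) := traceNorm_ptB_le hdiffH
  have hga : ((Pasym d * ρAB).trace).re = ((Pa * ρ).trace).re := by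
    rw [hAB, hPa, trace_embF_mul]
  have hgs : ((Psym d * ρAB).trace).re = ((Ps * ρ).trace).re := by
    rw [hAB, hPs, trace_embF_mul]
  rw [traceDist, hAC', hBC', ← ptB_sub, hga, hgs,
    Real.sqrt_mul ha0]
  linarith


end QEMD
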